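/- Let I > 0, I₃ > 0, m ∈ ℝ, and let q = (φ, θ, ψ) : ℝ → ℝ³ be twice differentiable and satisfy the Euler–Lagrange equations of the Lagrange top Lagrangian L, i.e. for each coordinate γ ∈ {φ, θ, ψ} and every time t, d/dt [ (∂L/∂q̇^γ)(q(t), q̇(t)) ] = (∂L/∂q^γ)(q(t), q̇(t)). Then the nutation angle satisfies the second-order equation I θ̈ − ( I m + I φ̇² cos θ − I₃ (ψ̇ + φ̇ cos θ) φ̇ ) sin θ = 0 at every time t. -/

import Mathlib

open Real

/-- The Lagrange top Lagrangian in Euler angles q = (φ, θ, ψ) (indices 0, 1, 2). -/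
noncomputable def lagrangeTopL (I I₃ m : ℝ) (q v : Fin 3 → ℝ) : ℝ :=
  (1 / 2) * I₃ * (v 2 + v 0 * cos (q 1)) ^ 2
    + (1 / 2) * I * ((v 0) ^ 2 * sin (q 1) ^ 2 + (v 1) ^ 2)
    - I * m * cos (q 1)


private lemma hasFDerivAt_sq {f : (Fin 3 → ℝ) → ℝ} {f' : (Fin 3 → ℝ) →L[ℝ] ℝ}
    {x : Fin 3 → ℝ} (h : HasFDerivAt f f' x) :
    HasFDerivAt (fun y => f y ^ 2) ((2 * f x) • f') x := by
  have := h.mul h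
  simpa [pow_two, two_mul, add_smul, Pi.mul_def] using this

lemma lt_fderiv_v (I I₃ m : ℝ) (q v : Fin 3 → ℝ) :
    fderiv ℝ (fun w => lagrangeTopL I I₃ m q w) v (Pi.single 1 1) = I * v 1 := by
  have h0 := hasFDerivAt_apply (𝕜 := ℝ) (F' := fun _ : Fin 3 => ℝ) 0 v
  have h1 := hasFDerivAt_apply (𝕜 := ℝ) (F' := fun _ : Fin 3 => ℝ) 1 v
  have h2 := hasFDerivAt_apply (𝕜 := ℝ) (F' := fun _ : Fin 3 => ℝ) 2 v
  have H := (((hasFDerivAt_sq (h2.add (h0.mul_const (cos (q 1))))).const_mul ((1/2) * I₃)).add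
      ((((hasFDerivAt_sq h0).mul_const (sin (q 1) ^ 2)).add (hasFDerivAt_sq h1)).const_mul ((1/2) * I))).sub_const
      (I * m * cos (q 1))
  have hf : (fun w => lagrangeTopL I I₃ m q w) = fun w : Fin 3 → ℝ =>
      (1 / 2) * I₃ * ((w 2) + (w 0) * cos (q 1)) ^ 2
        + (1 / 2) * I * ((w 0) ^ 2 * sin (q 1) ^ 2 + (w 1) ^ 2)
        - I * m * cos (q 1) := rfl
  rw [hf, show fderiv ℝ (fun w : Fin 3 → ℝ =>
      (1 / 2) * I₃ * ((w 2) + (w 0) * cos (q 1)) ^ 2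
        + (1 / 2) * I * ((w 0) ^ 2 * sin (q 1) ^ 2 + (w 1) ^ 2)
        - I * m * cos (q 1)) v = _ from H.fderiv]
  simp [Pi.single_apply]
  ring

lemma lt_fderiv_x (I I₃ m : ℝ) (q w : Fin 3 → ℝ) :
    fderiv ℝ (fun x => lagrangeTopL I I₃ m x w) q (Pi.single 1 1)
      = (I * m + I * (w 0) ^ 2 * cos (q 1)
          - I₃ * (w 2 + w 0 * cos (q 1)) * w 0) * sin (q 1) := by
  have h1 := hasFDerivAt_apply (𝕜 := ℝ) (F' := fun _ : Fin 3 => ℝ) 1 q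
  have hcos : HasFDerivAt (fun x : Fin 3 → ℝ => cos (x 1))
      ((-sin (q 1)) • (ContinuousLinearMap.proj 1 : (Fin 3 → ℝ) →L[ℝ] ℝ)) q :=
    by have := (Real.hasDerivAt_cos (q 1)).comp_hasFDerivAt q h1; exact this
  have hsin : HasFDerivAt (fun x : Fin 3 → ℝ => sin (x 1))
      ((cos (q 1)) • (ContinuousLinearMap.proj 1 : (Fin 3 → ℝ) →L[ℝ] ℝ)) q :=
    by have := (Real.hasDerivAt_sin (q 1)).comp_hasFDerivAt q h1; exact this
  have H := (((hasFDerivAt_sq ((hcos.const_mul (w 0)).const_add (w 2))).const_mul ((1/2) * I₃)).add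
      ((((hasFDerivAt_sq hsin).const_mul ((w 0) ^ 2)).add_const ((w 1) ^ 2)).const_mul ((1/2) * I))).sub
      (hcos.const_mul (I * m))
  have hf : (fun x => lagrangeTopL I I₃ m x w) = fun x : Fin 3 → ℝ =>
      (1 / 2) * I₃ * ((w 2) + (w 0) * cos (x 1)) ^ 2
        + (1 / 2) * I * ((w 0) ^ 2 * sin (x 1) ^ 2 + (w 1) ^ 2)
        - I * m * cos (x 1) := rfl
  rw [hf, show fderiv ℝ (fun x : Fin 3 → ℝ =>
      (1 / 2) * I₃ * ((w 2) + (w 0) * cos (x 1)) ^ 2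
        + (1 / 2) * I * ((w 0) ^ 2 * sin (x 1) ^ 2 + (w 1) ^ 2)
        - I * m * cos (x 1)) q = _ from H.fderiv]
  simp [Pi.single_apply]
  ring

theorem lagrange_top_nutation_equation
    (I I₃ m : ℝ) (hI : 0 < I) (hI₃ : 0 < I₃)
    (Q : ℝ → Fin 3 → ℝ)
    (hQ : Differentiable ℝ Q) (hQ' : Differentiable ℝ (deriv Q))
    (hEL : ∀ (γ : Fin 3) (t : ℝ),
      deriv (fun s => fderiv ℝ (fun v => lagrangeTopL I I₃ m (Q s) v) (deriv Q s)
          (Pi.single γ 1)) t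
        = fderiv ℝ (fun x => lagrangeTopL I I₃ m x (deriv Q t)) (Q t) (Pi.single γ 1)) :
    ∀ t : ℝ,
      I * deriv (fun s => deriv Q s 1) t
        - (I * m + I * (deriv Q t 0) ^ 2 * cos (Q t 1)
            - I₃ * (deriv Q t 2 + deriv Q t 0 * cos (Q t 1)) * deriv Q t 0)
          * sin (Q t 1) = 0 := by
  intro t
  have h := hEL 1 t
  rw [lt_fderiv_x] at h
  have hfun : (fun s => fderiv ℝ (fun v => lagrangeTopL I I₃ m (Q s) v) (deriv Q s)
      (Pi.single 1 1)) = fun s => I * deriv Q s 1 := by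
    funext s; exact lt_fderiv_v I I₃ m (Q s) (deriv Q s)
  rw [hfun] at h
  have hd : DifferentiableAt ℝ (fun s => deriv Q s 1) t :=
    ((ContinuousLinearMap.proj (R := ℝ) (φ := fun _ : Fin 3 => ℝ) 1).differentiableAt).comp t
      (hQ' t)
  rw [deriv_const_mul I hd] at h
  linarith [h]
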